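/- Let S be a finite nonempty set, G : S × S → ℝ a grammar taking values in {0,1}, a, b : S → ℝ, and θ ∈ [0,1]; set c(w) = (1−θ)·a(w) + θ·b(w). For a potential ψ let L(ψ) be the matrix with entries e^{ψ(w')}·G(w',w). Suppose s_a, s_b, s_c > 0 and r_a, r_b, r_c are vectors with all entries strictly positive such that L(a)·r_a = s_a·r_a, L(b)·r_b = s_b·r_b, and L(c)·r_c = s_c·r_c. Then s_c ≤ s_a^{1−θ} · s_b^{θ}; equivalently, log s_c ≤ (1−θ)·log s_a + θ·log s_b. -/

import Mathlib

open Finset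

/-- Two-function Hölder / log-convexity of sums. -/
lemma holder_sum_aux {ι : Type*} (s : Finset ι) (x y : ι → ℝ)
    (hx : ∀ i ∈ s, 0 ≤ x i) (hy : ∀ i ∈ s, 0 ≤ y i)
    (θ : ℝ) (h0 : 0 ≤ θ) (h1 : θ ≤ 1) :
    ∑ i ∈ s, (x i) ^ (1 - θ) * (y i) ^ θ ≤
      (∑ i ∈ s, x i) ^ (1 - θ) * (∑ i ∈ s, y i) ^ θ := by
  rcases eq_or_lt_of_le h0 with h0' | h0'
  · simp [← h0']
  rcases eq_or_lt_of_le h1 with h1' | h1'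
  · simp [h1']
  have hp : (1 / (1 - θ)).HolderConjugate (1 / θ) := by
    rw [Real.holderConjugate_iff]; constructor
    · rw [lt_div_iff₀ (by linarith)]; linarith
    · rw [one_div, one_div, inv_inv, inv_inv]; ring
  have H := Real.inner_le_Lp_mul_Lq s (fun i => x i ^ (1 - θ)) (fun i => y i ^ θ) hp
  have e1 : (∑ i ∈ s, |x i ^ (1 - θ)| ^ (1 / (1 - θ))) = ∑ i ∈ s, x i := by
    apply Finset.sum_congr rfl
    intro i hi
    rw [abs_of_nonneg (Real.rpow_nonneg (hx i hi) _),
      ← Real.rpow_mul (hx i hi), mul_one_div,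
      div_self (ne_of_gt (by linarith : (0:ℝ) < 1 - θ)), Real.rpow_one]
  have e2 : (∑ i ∈ s, |y i ^ θ| ^ (1 / θ)) = ∑ i ∈ s, y i := by
    apply Finset.sum_congr rfl
    intro i hi
    rw [abs_of_nonneg (Real.rpow_nonneg (hy i hi) _),
      ← Real.rpow_mul (hy i hi), mul_one_div, div_self (ne_of_gt h0'),
      Real.rpow_one]
  rw [e1, e2, one_div_one_div, one_div_one_div] at H
  exact H

/-- If `M` has nonnegative entries, `M r = s r` with `r > 0`, and `M v ≤ μ v`
with `v > 0`, then `s ≤ μ`. -/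
lemma eig_le_of_subinvariant {S : Type*} [Fintype S] [Nonempty S]
    (M : Matrix S S ℝ) (hM : ∀ i j, 0 ≤ M i j)
    (s μ : ℝ) (r v : S → ℝ) (hr : ∀ w, 0 < r w) (hv : ∀ w, 0 < v w)
    (heig : M.mulVec r = s • r) (hle : ∀ w, M.mulVec v w ≤ μ * v w) : s ≤ μ := by
  obtain ⟨w0, -, hw0⟩ := Finset.exists_min_image Finset.univ
    (fun w => v w / r w) ⟨Classical.arbitrary S, Finset.mem_univ _⟩
  set t := v w0 / r w0 with ht
  have htpos : 0 < t := div_pos (hv w0) (hr w0)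
  have hvt : ∀ w, t * r w ≤ v w := by
    intro w
    have := hw0 w (Finset.mem_univ w)
    rw [ht, div_le_div_iff₀ (hr w0) (hr w)] at this
    calc t * r w = v w0 * r w / r w0 := by rw [ht]; ring
      _ ≤ v w * r w0 / r w0 := by
          apply div_le_div_of_nonneg_right (by linarith) (hr w0).le
      _ = v w := mul_div_cancel_right₀ (v w) (ne_of_gt (hr w0))
  have key : s * v w0 ≤ μ * v w0 := by
    have hv0 : v w0 = t * r w0 := (div_mul_cancel₀ _ (ne_of_gt (hr w0))).symm
    calc s * v w0 = t * (s * r w0) := by rw [hv0]; ring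
      _ = t * (M.mulVec r w0) := by rw [heig]; simp [mul_comm]
      _ = ∑ w, M w0 w * (t * r w) := by
          rw [Matrix.mulVec, dotProduct, Finset.mul_sum]
          exact Finset.sum_congr rfl fun w _ => by ring
      _ ≤ ∑ w, M w0 w * v w := by
          apply Finset.sum_le_sum
          intro w _
          exact mul_le_mul_of_nonneg_left (hvt w) (hM w0 w)
      _ = M.mulVec v w0 := rfl
      _ ≤ μ * v w0 := hle w0
  exact le_of_mul_le_mul_right (by simpa [mul_comm] using key) (hv w0)

/-- **Log-convexity of the topological pressure.**
For potentials `a`, `b` and `c = (1−θ)·a + θ·b` with `θ ∈ [0,1]`, if the RPF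
matrices `L(a)`, `L(b)`, `L(c)` have positive eigenvalues `s_a`, `s_b`, `s_c`
with strictly positive right eigenvectors, then
`s_c ≤ s_a^(1−θ) * s_b^θ`, i.e. `log s_c ≤ (1−θ)·log s_a + θ·log s_b`. -/
theorem pressure_log_convex
    {S : Type*} [Fintype S] [Nonempty S] [DecidableEq S]
    (G : S → S → ℝ) (hG : ∀ w' w, G w' w = 0 ∨ G w' w = 1)
    (a b : S → ℝ) (θ : ℝ) (hθ0 : 0 ≤ θ) (hθ1 : θ ≤ 1)
    (c : S → ℝ) (hc : ∀ w, c w = (1 - θ) * a w + θ * b w)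
    (La Lb Lc : Matrix S S ℝ)
    (hLa : ∀ w' w, La w' w = Real.exp (a w') * G w' w)
    (hLb : ∀ w' w, Lb w' w = Real.exp (b w') * G w' w)
    (hLc : ∀ w' w, Lc w' w = Real.exp (c w') * G w' w)
    (sa sb sc : ℝ) (hsa : 0 < sa) (hsb : 0 < sb) (hsc : 0 < sc)
    (ra rb rc : S → ℝ)
    (hra : ∀ w, 0 < ra w) (hrb : ∀ w, 0 < rb w) (hrc : ∀ w, 0 < rc w)
    (heiga : La.mulVec ra = sa • ra) (heigb : Lb.mulVec rb = sb • rb)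
    (heigc : Lc.mulVec rc = sc • rc) :
    sc ≤ sa ^ (1 - θ) * sb ^ θ ∧
      Real.log sc ≤ (1 - θ) * Real.log sa + θ * Real.log sb := by
  have hGnn : ∀ w' w, 0 ≤ G w' w := fun w' w => by
    rcases hG w' w with h | h <;> rw [h] <;> norm_num
  -- the comparison vector
  set v : S → ℝ := fun w => ra w ^ (1 - θ) * rb w ^ θ with hvdef
  have hv : ∀ w, 0 < v w := fun w =>
    mul_pos (Real.rpow_pos_of_pos (hra w) _) (Real.rpow_pos_of_pos (hrb w) _)
  have hLcnn : ∀ i j, 0 ≤ Lc i j := fun i j => by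
    rw [hLc]; exact mul_nonneg (Real.exp_pos _).le (hGnn i j)
  -- key pointwise subinvariance
  have hkey : ∀ w', Lc.mulVec v w' ≤ (sa ^ (1 - θ) * sb ^ θ) * v w' := by
    intro w'
    have hexp : Real.exp (c w') =
        Real.exp (a w') ^ (1 - θ) * Real.exp (b w') ^ θ := by
      rw [hc, ← Real.exp_mul, ← Real.exp_mul, ← Real.exp_add]
      ring_nf
    have hstep : ∀ w, Lc w' w * v w =
        (La w' w * ra w) ^ (1 - θ) * (Lb w' w * rb w) ^ θ := by
      intro w
      rw [hLc, hLa, hLb, hexp]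
      rcases hG w' w with h | h
      · rw [h]
        simp only [mul_zero, zero_mul, mul_one]
        by_cases hθz : θ = 0
        · rw [hθz]; norm_num
        · rw [Real.zero_rpow hθz, mul_zero]
      · rw [h]
        simp only [mul_one, one_mul]
        rw [Real.mul_rpow (Real.exp_pos _).le (hra w).le,
          Real.mul_rpow (Real.exp_pos _).le (hrb w).le]
        ring
    have hholder : Lc.mulVec v w' ≤
        (La.mulVec ra w') ^ (1 - θ) * (Lb.mulVec rb w') ^ θ := by
      rw [Matrix.mulVec, dotProduct]
      calc ∑ w, Lc w' w * v w
          = ∑ w, (La w' w * ra w) ^ (1 - θ) * (Lb w' w * rb w) ^ θ :=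
            Finset.sum_congr rfl fun w _ => hstep w
        _ ≤ (∑ w, La w' w * ra w) ^ (1 - θ) * (∑ w, Lb w' w * rb w) ^ θ := by
            apply holder_sum_aux
            · intro i _
              exact mul_nonneg (by rw [hLa]; exact mul_nonneg (Real.exp_pos _).le (hGnn _ _)) (hra i).le
            · intro i _
              exact mul_nonneg (by rw [hLb]; exact mul_nonneg (Real.exp_pos _).le (hGnn _ _)) (hrb i).le
            · exact hθ0
            · exact hθ1
        _ = (La.mulVec ra w') ^ (1 - θ) * (Lb.mulVec rb w') ^ θ := rfl
    rw [heiga, heigb] at hholder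
    calc Lc.mulVec v w' ≤ ((sa • ra) w') ^ (1 - θ) * ((sb • rb) w') ^ θ := hholder
      _ = (sa ^ (1 - θ) * sb ^ θ) * v w' := by
          simp only [Pi.smul_apply, smul_eq_mul]
          rw [Real.mul_rpow hsa.le (hra w').le, Real.mul_rpow hsb.le (hrb w').le]
          ring
  have h1 : sc ≤ sa ^ (1 - θ) * sb ^ θ :=
    eig_le_of_subinvariant Lc hLcnn sc _ rc v hrc hv heigc hkey
  refine ⟨h1, ?_⟩
  calc Real.log sc ≤ Real.log (sa ^ (1 - θ) * sb ^ θ) :=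
        Real.log_le_log hsc h1
    _ = (1 - θ) * Real.log sa + θ * Real.log sb := by
        rw [Real.log_mul (by positivity) (by positivity),
          Real.log_rpow hsa, Real.log_rpow hsb]
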